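/- Let â ∈ ℝ^{n+1} be a Schur vector satisfying the stationarity equation T_n â = T_γ(â) b (equivalently ∇𝕁_P(â) = 0). Then c̃_k(â) = c_k for k = 0, 1, …, n; that is, the discrete spectral density Φ(ζ) := P(ζ) / ( â(ζ) â(ζ^{−1}) ) on 𝕋_{2N} matches the given covariance data c_0, …, c_n, so â solves the circulant rational covariance extension problem. -/

import Mathlib

open Finset Complex Matrix

noncomputable section

/-- The point `ζ_j = exp(iπ j / N)` of the discrete unit circle `𝕋_{2N}`. -/
def zeta (N : ℕ) (j : ℤ) : ℂ := Complex.exp (Real.pi * Complex.I * j / N)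

/-- The index set `j = -N+1, …, N`. -/
def Idx (N : ℕ) : Finset ℤ := Finset.Icc (-(N : ℤ) + 1) (N : ℤ)

/-- `a(ζ) = Σ_{k=0}^n a_k ζ^{-k}`. -/
def evC {n : ℕ} (a : Fin (n + 1) → ℝ) (z : ℂ) : ℂ :=
  ∑ k : Fin (n + 1), (a k : ℂ) * z ^ (-(k.val : ℤ))

/-- The symmetric Toeplitz matrix `T_n` with `(i,j)` entry `c_{|i-j|}`. -/
def Toep {n : ℕ} (c : Fin (n + 1) → ℝ) : Matrix (Fin (n + 1)) (Fin (n + 1)) ℝ :=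
  fun i j => c ⟨max ((i : ℕ) - (j : ℕ)) ((j : ℕ) - (i : ℕ)),
    by have := i.isLt; have := j.isLt; omega⟩

/-- `P(ζ) = b(ζ) b(ζ^{-1})`. -/
def PPd {n : ℕ} (b : Fin (n + 1) → ℝ) (z : ℂ) : ℂ := evC b z * evC b z⁻¹

/-- `𝕁_P(a) = aᵀ T_n a − (1/2N) Σ_j P(ζ_j) log( a(ζ_j) a(ζ_j^{-1}) )`. -/
def Jd (N : ℕ) {n : ℕ} (c b a : Fin (n + 1) → ℝ) : ℝ :=
  dotProduct a ((Toep c).mulVec a) -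
    (∑ j ∈ Idx N, (PPd b (zeta N j)).re *
        Real.log ((evC a (zeta N j) * evC a (zeta N j)⁻¹).re)) / (2 * N)

/-- `γ_t(a) = (1/2N) Σ_j ζ_j^t b(ζ_j)/a(ζ_j)` (a real number). -/
def gam (N : ℕ) {n : ℕ} (b a : Fin (n + 1) → ℝ) (t : ℤ) : ℝ :=
  ((∑ j ∈ Idx N, zeta N j ^ t * evC b (zeta N j) / evC a (zeta N j)) / (2 * N)).re

/-- The matrix `T_γ(a)` with `(i,j)` entry `γ_{j−i}(a)`. -/
def Tgam (N : ℕ) {n : ℕ} (b a : Fin (n + 1) → ℝ) :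
    Matrix (Fin (n + 1)) (Fin (n + 1)) ℝ :=
  fun i j => gam N b a ((j.val : ℤ) - (i.val : ℤ))

/-- `c̃_k(a) = (1/2N) Σ_j ζ_j^k P(ζ_j)/( a(ζ_j) a(ζ_j^{-1}) )` (a real number). -/
def ctil (N : ℕ) {n : ℕ} (b a : Fin (n + 1) → ℝ) (k : ℤ) : ℝ :=
  ((∑ j ∈ Idx N, zeta N j ^ k * PPd b (zeta N j) /
      (evC a (zeta N j) * evC a (zeta N j)⁻¹)) / (2 * N)).re

/-- The symmetric Toeplitz matrix `T_n(a)` with `(i,j)` entry `c̃_{|i−j|}(a)`. -/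
def TnA (N : ℕ) {n : ℕ} (b a : Fin (n + 1) → ℝ) :
    Matrix (Fin (n + 1)) (Fin (n + 1)) ℝ :=
  fun i j => ctil N b a ((max ((i : ℕ) - (j : ℕ)) ((j : ℕ) - (i : ℕ)) : ℕ) : ℤ)


/-- `a` is Schur. -/
def SchurVec {n : ℕ} (a : Fin (n + 1) → ℝ) : Prop :=
  0 < a 0 ∧ ∀ z : ℂ,
    (∑ k : Fin (n + 1), (a k : ℂ) * z ^ (n - k.val)) = 0 → ‖z‖ < 1

namespace Stmt13Aux

lemma zeta_ne_zero (N : ℕ) (j : ℤ) : zeta N j ≠ 0 := Complex.exp_ne_zero _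

lemma abs_zeta (N : ℕ) (j : ℤ) : ‖zeta N j‖ = 1 := by
  have h : zeta N j = Complex.exp ((Real.pi * j / N : ℝ) * Complex.I) := by
    unfold zeta; congr 1; push_cast; ring
  rw [h, Complex.norm_exp_ofReal_mul_I]

lemma zeta_neg (N : ℕ) (j : ℤ) : zeta N (-j) = (zeta N j)⁻¹ := by
  rw [zeta, zeta, ← Complex.exp_neg]; congr 1; push_cast; ring

lemma zeta_NN (N : ℕ) (hN : N ≠ 0) : zeta N (-(N:ℤ)) = zeta N (N:ℤ) := by
  have hN' : (N:ℂ) ≠ 0 := Nat.cast_ne_zero.mpr hN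
  have h1 : zeta N (N:ℤ) = Complex.exp (Real.pi * Complex.I) := by
    rw [zeta]; congr 1; push_cast; field_simp
  have h2 : zeta N (-(N:ℤ)) = Complex.exp (-(Real.pi * Complex.I)) := by
    rw [zeta]; congr 1; push_cast; field_simp
  rw [h1, h2, Complex.exp_neg, Complex.exp_pi_mul_I]
  norm_num

lemma sum_idx_inv (N : ℕ) (hN : N ≠ 0) (f : ℂ → ℂ) :
    ∑ j ∈ Idx N, f (zeta N j)⁻¹ = ∑ j ∈ Idx N, f (zeta N j) := by
  have hN1 : 1 ≤ (N:ℤ) := by exact_mod_cast Nat.one_le_iff_ne_zero.mpr hN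
  have h1 : ∀ j ∈ Idx N, f (zeta N j)⁻¹ = f (zeta N (-j)) := by
    intro j _; rw [zeta_neg]
  rw [Finset.sum_congr rfl h1]
  have h2 : ∑ j ∈ Idx N, f (zeta N (-j))
      = ∑ j ∈ Finset.Icc (-(N:ℤ)) ((N:ℤ)-1), f (zeta N j) := by
    refine Finset.sum_nbij' (fun j => -j) (fun j => -j) ?_ ?_ ?_ ?_ ?_ <;>
      simp [Idx, Finset.mem_Icc] <;> omega
  rw [h2]
  have e1 : Finset.Icc (-(N:ℤ)) ((N:ℤ)-1)
      = insert (-(N:ℤ)) (Finset.Icc (-(N:ℤ)+1) ((N:ℤ)-1)) := by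
    ext x; simp [Finset.mem_Icc]; omega
  have e2 : Idx N = insert (N:ℤ) (Finset.Icc (-(N:ℤ)+1) ((N:ℤ)-1)) := by
    ext x; simp [Idx, Finset.mem_Icc]; omega
  rw [e1, e2, Finset.sum_insert (by intro hm; simp [Finset.mem_Icc] at hm),
    Finset.sum_insert (by intro hm; simp [Finset.mem_Icc] at hm), zeta_NN N hN]

lemma evC_mul_pow {n : ℕ} (a : Fin (n+1) → ℝ) {z : ℂ} (hz : z ≠ 0) :
    z ^ n * evC a z = ∑ k : Fin (n+1), (a k : ℂ) * z ^ (n - k.val) := by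
  rw [evC, Finset.mul_sum]
  refine Finset.sum_congr rfl fun k _ => ?_
  have hk : (k:ℕ) ≤ n := Nat.lt_succ_iff.mp k.isLt
  have hzk : z ^ (k:ℕ) ≠ 0 := pow_ne_zero _ hz
  have hsplit : z ^ n = z ^ (n - k.val) * z ^ (k:ℕ) := by
    rw [← pow_add]; congr 1; omega
  rw [_root_.zpow_neg, zpow_natCast, hsplit]
  field_simp

lemma evC_ne_zero {n : ℕ} {a : Fin (n+1) → ℝ} (hS : SchurVec a) {z : ℂ}
    (hz : ‖z‖ = 1) : evC a z ≠ 0 := by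
  have hz0 : z ≠ 0 := by intro h; rw [h] at hz; simp at hz
  intro h
  have h2 := evC_mul_pow a hz0
  rw [h, mul_zero] at h2
  have h3 := hS.2 z h2.symm
  rw [hz] at h3
  exact lt_irrefl 1 h3

lemma evC_inv {n : ℕ} (a : Fin (n+1) → ℝ) (z : ℂ) :
    evC a z⁻¹ = ∑ k : Fin (n+1), (a k : ℂ) * z ^ (k.val : ℤ) := by
  rw [evC]
  refine Finset.sum_congr rfl fun k _ => ?_
  simp [_root_.inv_zpow, _root_.zpow_neg]

end Stmt13Aux

namespace Stmt13Aux

lemma ctil_even (N n : ℕ) (hN : N ≠ 0) (b a : Fin (n+1) → ℝ) (k : ℤ) :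
    ctil N b a (-k) = ctil N b a k := by
  unfold ctil
  congr 2
  have key := sum_idx_inv N hN
      (fun z => z ^ (-k) * PPd b z / (evC a z * evC a z⁻¹))
  rw [← key]
  refine Finset.sum_congr rfl fun j _ => ?_
  simp only [PPd, inv_inv, _root_.inv_zpow, _root_.zpow_neg, inv_inv]
  ring

/-- Generic summation-by-parts step. -/
lemma key_sum (N n : ℕ) (i : Fin (n+1)) (v : Fin (n+1) → ℝ) (g : ℂ → ℂ) :
    ∑ k : Fin (n+1), v k *
        ((∑ j ∈ Idx N, zeta N j ^ ((k.val:ℤ) - (i.val:ℤ)) * g (zeta N j)) / (2*(N:ℂ))).re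
      = ((∑ j ∈ Idx N, (zeta N j) ^ (-(i.val:ℤ)) * evC v (zeta N j)⁻¹ * g (zeta N j))
          / (2*(N:ℂ))).re := by
  have h1 : ∀ k : Fin (n+1), v k *
      ((∑ j ∈ Idx N, zeta N j ^ ((k.val:ℤ) - (i.val:ℤ)) * g (zeta N j)) / (2*(N:ℂ))).re
      = (((v k : ℂ) * ∑ j ∈ Idx N, zeta N j ^ ((k.val:ℤ) - (i.val:ℤ)) * g (zeta N j))
          / (2*(N:ℂ))).re := by
    intro k
    rw [mul_div_assoc, Complex.re_ofReal_mul]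
  rw [Finset.sum_congr rfl (fun k _ => h1 k), ← Complex.re_sum, ← Finset.sum_div]
  congr 2
  calc ∑ k : Fin (n+1), (v k : ℂ) * ∑ j ∈ Idx N, zeta N j ^ ((k.val:ℤ) - (i.val:ℤ)) * g (zeta N j)
      = ∑ k : Fin (n+1), ∑ j ∈ Idx N,
          (v k : ℂ) * (zeta N j ^ ((k.val:ℤ) - (i.val:ℤ)) * g (zeta N j)) := by
        exact Finset.sum_congr rfl fun k _ => Finset.mul_sum _ _ _
    _ = ∑ j ∈ Idx N, ∑ k : Fin (n+1),
          (v k : ℂ) * (zeta N j ^ ((k.val:ℤ) - (i.val:ℤ)) * g (zeta N j)) := Finset.sum_comm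
    _ = ∑ j ∈ Idx N, (zeta N j) ^ (-(i.val:ℤ)) * evC v (zeta N j)⁻¹ * g (zeta N j) := by
        refine Finset.sum_congr rfl fun j _ => ?_
        rw [evC_inv]
        have hterm : ∀ k : Fin (n+1),
            (v k : ℂ) * (zeta N j ^ ((k.val:ℤ) - (i.val:ℤ)) * g (zeta N j))
            = zeta N j ^ (-(i.val:ℤ)) * ((v k : ℂ) * zeta N j ^ (k.val:ℤ)) * g (zeta N j) := by
          intro k
          rw [zpow_sub₀ (zeta_ne_zero N j), _root_.zpow_neg]
          ring
        rw [Finset.sum_congr rfl (fun k _ => hterm k), ← Finset.sum_mul, ← Finset.mul_sum]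
  
lemma row_eq (N n : ℕ) (b ahat : Fin (n+1) → ℝ)
    (hA : ∀ z : ℂ, ‖z‖ = 1 → evC ahat z ≠ 0) (i : Fin (n+1)) :
    ∑ k : Fin (n+1), ahat k * ctil N b ahat ((k.val : ℤ) - (i.val : ℤ))
      = ∑ k : Fin (n+1), b k * gam N b ahat ((k.val : ℤ) - (i.val : ℤ)) := by
  have hcast : ((2:ℂ) * N) = ((2 * N : ℝ) : ℂ) := by push_cast; ring
  have hL : ∀ k : Fin (n+1), ctil N b ahat ((k.val : ℤ) - (i.val : ℤ))
      = ((∑ j ∈ Idx N, zeta N j ^ ((k.val:ℤ) - (i.val:ℤ)) *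
          (PPd b (zeta N j) / (evC ahat (zeta N j) * evC ahat (zeta N j)⁻¹))) / (2*(N:ℂ))).re := by
    intro k
    unfold ctil
    rw [hcast]
    congr 2
    exact Finset.sum_congr rfl fun j _ => (mul_div_assoc _ _ _)
  have hR : ∀ k : Fin (n+1), gam N b ahat ((k.val : ℤ) - (i.val : ℤ))
      = ((∑ j ∈ Idx N, zeta N j ^ ((k.val:ℤ) - (i.val:ℤ)) *
          (evC b (zeta N j) / evC ahat (zeta N j))) / (2*(N:ℂ))).re := by
    intro k
    unfold gam
    rw [hcast]
    congr 2
    exact Finset.sum_congr rfl fun j _ => (mul_div_assoc _ _ _)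
  simp only [hL, hR]
  rw [key_sum N n i ahat (fun z => PPd b z / (evC ahat z * evC ahat z⁻¹)),
    key_sum N n i b (fun z => evC b z / evC ahat z)]
  congr 2
  refine Finset.sum_congr rfl fun j _ => ?_
  have h1 : evC ahat (zeta N j) ≠ 0 := hA _ (abs_zeta N j)
  have h2 : evC ahat (zeta N j)⁻¹ ≠ 0 := by
    refine hA _ ?_
    rw [norm_inv, abs_zeta]; norm_num
  have key : evC ahat (zeta N j)⁻¹ *
      (PPd b (zeta N j) / (evC ahat (zeta N j) * evC ahat (zeta N j)⁻¹))
      = evC b (zeta N j)⁻¹ * (evC b (zeta N j) / evC ahat (zeta N j)) := by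
    rw [PPd, ← div_mul_div_comm]
    calc evC ahat (zeta N j)⁻¹ * (evC b (zeta N j) / evC ahat (zeta N j) * (evC b (zeta N j)⁻¹ / evC ahat (zeta N j)⁻¹))
        = (evC b (zeta N j) / evC ahat (zeta N j)) * (evC ahat (zeta N j)⁻¹ * evC b (zeta N j)⁻¹ / evC ahat (zeta N j)⁻¹) := by ring
      _ = (evC b (zeta N j) / evC ahat (zeta N j)) * evC b (zeta N j)⁻¹ := by rw [mul_div_cancel_left₀ _ h2]
      _ = evC b (zeta N j)⁻¹ * (evC b (zeta N j) / evC ahat (zeta N j)) := mul_comm _ _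
  rw [mul_assoc, mul_assoc, key]

end Stmt13Aux

namespace Stmt13Aux

open Polynomial

def sIdx {n : ℕ} (i j : Fin (n+1)) : Fin (n+1) :=
  ⟨max (i.val - j.val) (j.val - i.val), by have := i.isLt; have := j.isLt; omega⟩

lemma coeff_sumCX (f : ℕ → ℂ) (M m : ℕ) :
    (∑ j ∈ Finset.range M, Polynomial.C (f j) * Polynomial.X ^ j).coeff m
      = if m < M then f m else 0 := by
  rw [Polynomial.finset_sum_coeff]
  simp only [Polynomial.coeff_C_mul, Polynomial.coeff_X_pow, mul_ite, mul_one, mul_zero]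
  rw [Finset.sum_ite_eq (Finset.range M) m f]
  simp

lemma coeff_sumCX_rev (f : ℕ → ℂ) (n m : ℕ) :
    (∑ j ∈ Finset.range (n+1), Polynomial.C (f j) * Polynomial.X ^ (n - j)).coeff m
      = if m ≤ n then f (n - m) else 0 := by
  rw [Polynomial.finset_sum_coeff]
  simp only [Polynomial.coeff_C_mul, Polynomial.coeff_X_pow, mul_ite, mul_one, mul_zero]
  split_ifs with hm
  · rw [Finset.sum_eq_single (n - m)]
    · rw [if_pos (by omega)]
    · intro j hj hne
      rw [if_neg]
      simp only [Finset.mem_range] at hj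
      omega
    · intro hmem
      exact absurd (Finset.mem_range.mpr (by omega)) hmem
  · refine Finset.sum_eq_zero fun j hj => ?_
    simp only [Finset.mem_range] at hj
    rw [if_neg (by omega)]

lemma natDeg_le_of_coeff {P : ℂ[X]} {M : ℕ} (h : ∀ m, M < m → P.coeff m = 0) :
    P.natDegree ≤ M := Polynomial.natDegree_le_iff_coeff_eq_zero.mpr h

/-- Splitting a polynomial with vanishing middle band. -/
lemma decompP (n : ℕ) (P : ℂ[X]) (hd : ∀ m, 3*n < m → P.coeff m = 0)
    (hz : ∀ i, i ≤ n → P.coeff (n+i) = 0) :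
    P = (∑ m ∈ Finset.range n, Polynomial.C (P.coeff m) * Polynomial.X ^ m)
      + (∑ m ∈ Finset.range n, Polynomial.C (P.coeff (2*n+1+m)) * Polynomial.X ^ m)
          * Polynomial.X ^ (2*n+1) := by
  ext m
  rw [Polynomial.coeff_add, Polynomial.coeff_mul_X_pow', coeff_sumCX]
  by_cases h1 : m < n
  · rw [if_pos h1, if_neg (by omega)]
    simp
  · rw [if_neg h1]
    by_cases h2 : m ≤ 2*n
    · rw [if_neg (by omega)]
      have : P.coeff m = P.coeff (n + (m - n)) := by congr 1; omega
      rw [this, hz (m - n) (by omega)]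
      simp
    · rw [if_pos (by omega), coeff_sumCX]
      by_cases h3 : m ≤ 3*n
      · rw [if_pos (by omega)]
        have : P.coeff m = P.coeff (2*n+1 + (m - (2*n+1))) := by congr 1; omega
        rw [this]
        simp
      · rw [if_neg (by omega), hd m (by omega)]
        simp

lemma uniq {n : ℕ} (hn : 1 ≤ n) (a d : Fin (n+1) → ℝ) (hS : SchurVec a)
    (h : ∀ i : Fin (n+1), ∑ j : Fin (n+1), a j * d (sIdx i j) = 0) :
    ∀ k, d k = 0 := by
  classical
  set aa : ℕ → ℂ := fun j => ((a ⟨min j n, by omega⟩ : ℝ) : ℂ) with haa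
  set dd : ℕ → ℂ := fun m => ((d ⟨min (max (m - n) (n - m)) n, by omega⟩ : ℝ) : ℂ) with hdd
  set pt : ℂ[X] := ∑ j ∈ Finset.range (n+1), Polynomial.C (aa j) * Polynomial.X ^ j with hpt
  set p : ℂ[X] := ∑ j ∈ Finset.range (n+1), Polynomial.C (aa j) * Polynomial.X ^ (n - j) with hp
  set Q : ℂ[X] := ∑ m ∈ Finset.range (2*n+1), Polynomial.C (dd m) * Polynomial.X ^ m with hQ
  have hpt_coeff : ∀ m, pt.coeff m = if m ≤ n then aa m else 0 := by
    intro m; rw [hpt, coeff_sumCX]; simp [Nat.lt_succ_iff]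
  have hp_coeff : ∀ m, p.coeff m = if m ≤ n then aa (n - m) else 0 := by
    intro m; rw [hp, coeff_sumCX_rev]
  have hQ_coeff : ∀ m, Q.coeff m = if m ≤ 2*n then dd m else 0 := by
    intro m; rw [hQ, coeff_sumCX]; simp [Nat.lt_succ_iff]
  have hpt_deg : pt.natDegree ≤ n :=
    natDeg_le_of_coeff fun m hm => by rw [hpt_coeff, if_neg (by omega)]
  have hp_deg : p.natDegree ≤ n :=
    natDeg_le_of_coeff fun m hm => by rw [hp_coeff, if_neg (by omega)]
  have hQ_deg : Q.natDegree ≤ 2*n :=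
    natDeg_le_of_coeff fun m hm => by rw [hQ_coeff, if_neg (by omega)]
  -- reflection facts
  have hrefl_pt : Polynomial.reflect n pt = p := by
    ext m
    rw [Polynomial.coeff_reflect]
    rcases le_or_gt m n with hm | hm
    · rw [Polynomial.revAt_le hm, hpt_coeff, hp_coeff, if_pos (by omega), if_pos hm]
    · rw [Polynomial.revAt_eq_self_of_lt hm, hpt_coeff, hp_coeff, if_neg (by omega),
        if_neg (by omega)]
  have hrefl_Q : Polynomial.reflect (2*n) Q = Q := by
    ext m
    rw [Polynomial.coeff_reflect]
    rcases le_or_gt m (2*n) with hm | hm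
    · rw [Polynomial.revAt_le hm, hQ_coeff, hQ_coeff, if_pos (by omega), if_pos hm]
      simp only [hdd]
      exact congrArg (fun t => ((d t : ℝ) : ℂ)) (Fin.ext
        (by show min (max (2*n - m - n) (n - (2*n - m))) n = min (max (m - n) (n - m)) n; omega))
    · rw [Polynomial.revAt_eq_self_of_lt hm]
  -- the two key polynomials
  set F : ℂ[X] := Q * pt with hF
  set G : ℂ[X] := Q * p with hG
  have hF_deg : ∀ m, 3*n < m → F.coeff m = 0 := by
    intro m hm
    apply Polynomial.coeff_eq_zero_of_natDegree_lt
    calc F.natDegree ≤ Q.natDegree + pt.natDegree := Polynomial.natDegree_mul_le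
      _ ≤ 2*n + n := by omega
      _ < m := by omega
  have hG_deg : ∀ m, 3*n < m → G.coeff m = 0 := by
    intro m hm
    apply Polynomial.coeff_eq_zero_of_natDegree_lt
    calc G.natDegree ≤ Q.natDegree + p.natDegree := Polynomial.natDegree_mul_le
      _ ≤ 2*n + n := by omega
      _ < m := by omega
  -- middle coefficients of F vanish
  have hsum : ∀ i : Fin (n+1), ∑ j ∈ Finset.range (n+1), aa j * dd (n + i.val - j) = 0 := by
    intro i
    rw [← Fin.sum_univ_eq_sum_range (fun j => aa j * dd (n + i.val - j)) (n+1)]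
    have e : ∀ j : Fin (n+1), aa j.val * dd (n + i.val - j.val) = ((a j * d (sIdx i j) : ℝ) : ℂ) := by
      intro j
      have hj := j.isLt
      have hi := i.isLt
      simp only [haa, hdd]
      push_cast
      congr 1
      · exact congrArg (fun t => ((a t : ℝ) : ℂ)) (Fin.ext
          (by show min (j.val) n = (j.val); omega))
      · exact congrArg (fun t => ((d t : ℝ) : ℂ)) (Fin.ext
          (by show min (max (n + i.val - j.val - n) (n - (n + i.val - j.val))) n
                = max (i.val - j.val) (j.val - i.val); omega))
    rw [Finset.sum_congr rfl (fun j _ => e j), ← Complex.ofReal_sum, h i, Complex.ofReal_zero]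
  have hF0 : ∀ i : ℕ, i ≤ n → F.coeff (n + i) = 0 := by
    intro i hi
    have step1 : F.coeff (n+i)
        = ∑ j ∈ Finset.range (n+1), aa j * Q.coeff (n + i - j) := by
      calc F.coeff (n+i) = (pt * Q).coeff (n+i) := by rw [hF, mul_comm]
        _ = ∑ j ∈ Finset.range (n+1), ((Polynomial.C (aa j) * Polynomial.X ^ j) * Q).coeff (n+i) := by
            rw [← Polynomial.finset_sum_coeff, ← Finset.sum_mul]
        _ = ∑ j ∈ Finset.range (n+1), aa j * Q.coeff (n + i - j) := by
            refine Finset.sum_congr rfl fun j hj => ?_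
            simp only [Finset.mem_range, Nat.lt_succ_iff] at hj
            rw [mul_assoc, mul_comm (Polynomial.X ^ j) Q, ← mul_assoc, Polynomial.coeff_mul_X_pow',
              if_pos (by omega), Polynomial.coeff_C_mul]
    have step2 : ∀ j ∈ Finset.range (n+1), aa j * Q.coeff (n + i - j) = aa j * dd (n + i - j) := by
      intro j hj
      simp only [Finset.mem_range, Nat.lt_succ_iff] at hj
      rw [hQ_coeff, if_pos (by omega)]
    rw [step1, Finset.sum_congr rfl step2]
    exact hsum ⟨i, by omega⟩
  -- middle coefficients of G vanish
  have hFG : Polynomial.reflect (2*n + n) F = G := by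
    rw [hF, hG, Polynomial.reflect_mul Q pt hQ_deg hpt_deg, hrefl_Q, hrefl_pt]
  have hG0 : ∀ i : ℕ, i ≤ n → G.coeff (n + i) = 0 := by
    intro i hi
    rw [← hFG, Polynomial.coeff_reflect, Polynomial.revAt_le (by omega)]
    have : 2*n + n - (n + i) = n + (n - i) := by omega
    rw [this]
    exact hF0 _ (by omega)
  -- decompositions
  set LF : ℂ[X] := ∑ m ∈ Finset.range n, Polynomial.C (F.coeff m) * Polynomial.X ^ m with hLF
  set UF : ℂ[X] := ∑ m ∈ Finset.range n, Polynomial.C (F.coeff (2*n+1+m)) * Polynomial.X ^ m with hUF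
  set LG : ℂ[X] := ∑ m ∈ Finset.range n, Polynomial.C (G.coeff m) * Polynomial.X ^ m with hLG
  set UG : ℂ[X] := ∑ m ∈ Finset.range n, Polynomial.C (G.coeff (2*n+1+m)) * Polynomial.X ^ m with hUG
  have hFdec : F = LF + UF * Polynomial.X ^ (2*n+1) := decompP n F hF_deg hF0
  have hGdec : G = LG + UG * Polynomial.X ^ (2*n+1) := decompP n G hG_deg hG0
  have hLF_deg : LF.natDegree ≤ n - 1 :=
    natDeg_le_of_coeff fun m hm => by rw [hLF, coeff_sumCX, if_neg (by omega)]
  have hUF_deg : UF.natDegree ≤ n - 1 :=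
    natDeg_le_of_coeff fun m hm => by rw [hUF, coeff_sumCX, if_neg (by omega)]
  have hLG_deg : LG.natDegree ≤ n - 1 :=
    natDeg_le_of_coeff fun m hm => by rw [hLG, coeff_sumCX, if_neg (by omega)]
  have hUG_deg : UG.natDegree ≤ n - 1 :=
    natDeg_le_of_coeff fun m hm => by rw [hUG, coeff_sumCX, if_neg (by omega)]
  -- nonvanishing of p and pt
  have ha0 : ((a 0 : ℝ) : ℂ) ≠ 0 := by
    rw [Complex.ofReal_ne_zero]; exact ne_of_gt hS.1
  have hp_cn : p.coeff n ≠ 0 := by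
    rw [hp_coeff, if_pos le_rfl]
    have e : aa (n - n) = ((a 0 : ℝ) : ℂ) := by
      simp only [haa]
      exact congrArg (fun t => ((a t : ℝ) : ℂ)) (Fin.ext (by show min (n - n) n = 0; omega))
    rw [e]; exact ha0
  have hpt_c0 : pt.coeff 0 ≠ 0 := by
    rw [hpt_coeff, if_pos (by omega)]
    have e : aa 0 = ((a 0 : ℝ) : ℂ) := by
      simp only [haa]
      exact congrArg (fun t => ((a t : ℝ) : ℂ)) (Fin.ext (by show min 0 n = 0; omega))
    rw [e]; exact ha0
  have hp_ne : p ≠ 0 := fun h0 => hp_cn (by rw [h0]; simp)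
  have hpt_ne : pt ≠ 0 := fun h0 => hpt_c0 (by rw [h0]; simp)
  have hp_nat : p.natDegree = n :=
    le_antisymm hp_deg (Polynomial.le_natDegree_of_ne_zero hp_cn)
  -- evaluation and roots
  have hp_eval : ∀ z : ℂ, p.eval z = ∑ j ∈ Finset.range (n+1), aa j * z ^ (n - j) := by
    intro z; rw [hp]; simp [Polynomial.eval_finset_sum]
  have hpt_eval : ∀ z : ℂ, pt.eval z = ∑ j ∈ Finset.range (n+1), aa j * z ^ j := by
    intro z; rw [hpt]; simp [Polynomial.eval_finset_sum]
  have hp_root : ∀ z : ℂ, p.eval z = 0 → ‖z‖ < 1 := by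
    intro z hz
    apply hS.2 z
    have e : ∑ k : Fin (n+1), ((a k : ℝ) : ℂ) * z ^ (n - k.val)
        = ∑ j ∈ Finset.range (n+1), aa j * z ^ (n - j) := by
      rw [← Fin.sum_univ_eq_sum_range (fun j => aa j * z ^ (n - j)) (n+1)]
      refine Finset.sum_congr rfl fun k _ => ?_
      have hk := k.isLt
      simp only [haa]
      congr 2
      exact congrArg a (Fin.ext (by show k.val = min k.val n; omega))
    rw [e, ← hp_eval, hz]
  have hpt_root : ∀ z : ℂ, pt.eval z = 0 → 1 < ‖z‖ := by
    intro z hz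
    have hz0 : z ≠ 0 := by
      intro h0
      rw [h0, ← Polynomial.coeff_zero_eq_eval_zero] at hz
      exact hpt_c0 hz
    have hrel : pt.eval z = z ^ n * p.eval z⁻¹ := by
      rw [hp_eval, hpt_eval, Finset.mul_sum]
      refine Finset.sum_congr rfl fun j hj => ?_
      simp only [Finset.mem_range, Nat.lt_succ_iff] at hj
      rw [inv_pow, ← mul_assoc, mul_comm (z^n) (aa j), mul_assoc]
      congr 1
      rw [show z ^ n = z ^ j * z ^ (n - j) from by rw [← pow_add]; congr 1; omega]
      rw [mul_assoc, mul_inv_cancel₀ (pow_ne_zero _ hz0), mul_one]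
    rw [hrel] at hz
    have hz2 : p.eval z⁻¹ = 0 := by
      rcases mul_eq_zero.mp hz with h0 | h0
      · exact absurd h0 (pow_ne_zero _ hz0)
      · exact h0
    have h3 := hp_root _ hz2
    rw [norm_inv] at h3
    have h4 : 0 < ‖z‖ := by
      rw [norm_pos_iff]; exact hz0
    have h5 := mul_lt_mul_of_pos_right h3 h4
    rw [inv_mul_cancel₀ (ne_of_gt h4), one_mul] at h5
    exact h5
  -- coprimality
  have hcop : IsCoprime p pt := by
    rw [← EuclideanDomain.gcd_isUnit_iff]
    by_contra hu
    have hdvd1 : EuclideanDomain.gcd p pt ∣ p := EuclideanDomain.gcd_dvd_left p pt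
    have hdvd2 : EuclideanDomain.gcd p pt ∣ pt := EuclideanDomain.gcd_dvd_right p pt
    have hg0 : EuclideanDomain.gcd p pt ≠ 0 := by
      intro h0
      rw [h0] at hdvd1
      exact hp_ne (zero_dvd_iff.mp hdvd1)
    have hdeg : 0 < (EuclideanDomain.gcd p pt).degree := by
      rcases lt_or_eq_of_le (Polynomial.zero_le_degree_iff.mpr hg0) with h | h
      · exact h
      · exact absurd (Polynomial.isUnit_iff_degree_eq_zero.mpr h.symm) hu
    obtain ⟨z, hzroot⟩ := Complex.exists_root hdeg
    have hz1 : p.eval z = 0 := Polynomial.eval_eq_zero_of_dvd_of_eval_eq_zero hdvd1 hzroot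
    have hz2 : pt.eval z = 0 := Polynomial.eval_eq_zero_of_dvd_of_eval_eq_zero hdvd2 hzroot
    have := hp_root z hz1
    have := hpt_root z hz2
    linarith
  -- main algebraic identity
  have hmain : p * F = pt * G := by rw [hF, hG]; ring
  have hWeq : p * LF - pt * LG = (pt * UG - p * UF) * Polynomial.X ^ (2*n+1) := by
    have h1 : p * (LF + UF * Polynomial.X ^ (2*n+1)) = pt * (LG + UG * Polynomial.X ^ (2*n+1)) := by
      rw [← hFdec, ← hGdec]; exact hmain
    linear_combination h1
  have hW0 : pt * UG - p * UF = 0 := by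
    by_contra hne
    have h1 : ((pt * UG - p * UF) * Polynomial.X ^ (2*n+1)).natDegree
        = (pt * UG - p * UF).natDegree + (2*n+1) := Polynomial.natDegree_mul_X_pow (n := 2*n+1) hne
    have h2 : (p * LF - pt * LG).natDegree ≤ 2*n - 1 := by
      refine le_trans (Polynomial.natDegree_sub_le _ _) ?_
      refine max_le ?_ ?_
      · exact le_trans Polynomial.natDegree_mul_le (by omega)
      · exact le_trans Polynomial.natDegree_mul_le (by omega)
    rw [hWeq] at h2
    omega
  have hLeq : p * LF = pt * LG := by
    have := hWeq
    rw [hW0, zero_mul, sub_eq_zero] at this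
    exact this
  have hUeq : pt * UG = p * UF := by
    rw [sub_eq_zero] at hW0
    exact hW0
  -- kill the pieces
  have hLG0 : LG = 0 := by
    by_contra hne
    have hdvd : p ∣ pt * LG := ⟨LF, hLeq.symm⟩
    have hdvd2 : p ∣ LG := hcop.dvd_of_dvd_mul_left hdvd
    have := Polynomial.natDegree_le_of_dvd hdvd2 hne
    omega
  have hUG0 : UG = 0 := by
    by_contra hne
    have hdvd : p ∣ pt * UG := ⟨UF, hUeq⟩
    have hdvd2 : p ∣ UG := hcop.dvd_of_dvd_mul_left hdvd
    have := Polynomial.natDegree_le_of_dvd hdvd2 hne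
    omega
  have hLF0 : LF = 0 := by
    have h1 : p * LF = 0 := by rw [hLeq, hLG0, mul_zero]
    rcases mul_eq_zero.mp h1 with h | h
    · exact absurd h hp_ne
    · exact h
  have hUF0 : UF = 0 := by
    have h1 : p * UF = 0 := by rw [← hUeq, hUG0, mul_zero]
    rcases mul_eq_zero.mp h1 with h | h
    · exact absurd h hp_ne
    · exact h
  have hF0' : F = 0 := by rw [hFdec, hLF0, hUF0]; simp
  have hQ0 : Q = 0 := by
    have hqpt : Q * pt = 0 := by rw [← hF]; exact hF0'
    rcases mul_eq_zero.mp hqpt with h | h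
    · exact h
    · exact absurd h hpt_ne
  -- extract
  intro k
  have hk := k.isLt
  have h1 : Q.coeff (n + k.val) = 0 := by rw [hQ0]; simp
  rw [hQ_coeff, if_pos (by omega)] at h1
  simp only [hdd, Complex.ofReal_eq_zero] at h1
  have e : d k = d ⟨min (max (n + k.val - n) (n - (n + k.val))) n, by omega⟩ :=
    congrArg d (Fin.ext (by show k.val = min (max (n + k.val - n) (n - (n + k.val))) n; omega))
  rw [e]
  exact h1

end Stmt13Aux

open Stmt13Aux

/-- if the Schur vector `â` satisfies the stationarity equation
`T_n â = T_γ(â) b`, then the discrete spectral density `Φ = P/(â(ζ)â(ζ⁻¹))` matches the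
covariance data: `c̃_k(â) = c_k` for `k = 0, 1, …, n`. -/
theorem stmt13 (N n : ℕ) (hn : 1 ≤ n) (hNn : n < N)
    (c b : Fin (n + 1) → ℝ) (hb0 : b 0 = 1)
    (ahat : Fin (n + 1) → ℝ) (hSchur : SchurVec ahat)
    (hstat : (Toep c).mulVec ahat = (Tgam N b ahat).mulVec b) :
    ∀ k : Fin (n + 1), ctil N b ahat (k.val : ℤ) = c k := by
  have hN : N ≠ 0 := by omega
  have hA : ∀ z : ℂ, ‖z‖ = 1 → evC ahat z ≠ 0 :=
    fun z hz => evC_ne_zero hSchur hz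
  set d : Fin (n+1) → ℝ := fun k => ctil N b ahat (k.val : ℤ) - c k with hd
  have hzero : ∀ i : Fin (n+1), ∑ j : Fin (n+1), ahat j * d (sIdx i j) = 0 := by
    intro i
    have h1 := congrFun hstat i
    simp only [Matrix.mulVec, dotProduct] at h1
    have h2 := row_eq N n b ahat hA i
    have h3 : ∀ j : Fin (n+1), ctil N b ahat ((j.val:ℤ) - (i.val:ℤ))
        = ctil N b ahat (((sIdx i j).val : ℤ)) := by
      intro j
      have hi := i.isLt
      have hj := j.isLt
      rcases le_total (i.val) (j.val) with hij | hij
      · congr 1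
        show (j.val:ℤ) - (i.val:ℤ) = ((max (i.val - j.val) (j.val - i.val) : ℕ) : ℤ)
        omega
      · rw [show (j.val:ℤ) - (i.val:ℤ) = -(((sIdx i j).val : ℤ)) from by
          show _ = -((max (i.val - j.val) (j.val - i.val) : ℕ) : ℤ); omega]
        exact ctil_even N n hN b ahat _
    have h4 : ∑ j : Fin (n+1), ahat j * ctil N b ahat (((sIdx i j).val : ℤ))
        = ∑ j : Fin (n+1), ahat j * c (sIdx i j) := by
      calc ∑ j : Fin (n+1), ahat j * ctil N b ahat (((sIdx i j).val : ℤ))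
          = ∑ j : Fin (n+1), ahat j * ctil N b ahat ((j.val:ℤ) - (i.val:ℤ)) :=
            Finset.sum_congr rfl fun j _ => by rw [h3 j]
        _ = ∑ j : Fin (n+1), b j * gam N b ahat ((j.val:ℤ) - (i.val:ℤ)) := h2
        _ = ∑ j : Fin (n+1), Tgam N b ahat i j * b j :=
            Finset.sum_congr rfl fun j _ => mul_comm _ _
        _ = ∑ j : Fin (n+1), Toep c i j * ahat j := h1.symm
        _ = ∑ j : Fin (n+1), ahat j * c (sIdx i j) :=
            Finset.sum_congr rfl fun j _ => mul_comm _ _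
    have h5 : ∑ j : Fin (n+1), ahat j * d (sIdx i j)
        = (∑ j : Fin (n+1), ahat j * ctil N b ahat (((sIdx i j).val : ℤ)))
          - (∑ j : Fin (n+1), ahat j * c (sIdx i j)) := by
      rw [← Finset.sum_sub_distrib]
      exact Finset.sum_congr rfl fun j _ => by rw [hd]; ring
    rw [h5, h4, sub_self]
  intro k
  have hfin := uniq hn ahat d hSchur hzero k
  simp only [hd] at hfin
  exact sub_eq_zero.mp hfin

end
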